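/- Fix p < -1 and α with 0 < α < 1. Then lim_{r → +∞} Θ_p{α, r} = π/2. -/

import Mathlib

open Real Filter Set MeasureTheory intervalIntegral Topology

/-- `F_p(s, α, r) = ((1 - s^{2p})/(1 - r^{2p}))(r² + α²)
  + ((s^{2p} - r^{2p})/(1 - r^{2p}))(1 + α² r²) - s² - α² r² s⁻²`. -/
noncomputable def Fp (p α r s : ℝ) : ℝ :=
  (1 - s ^ (2 * p)) / (1 - r ^ (2 * p)) * (r ^ 2 + α ^ 2) +
  (s ^ (2 * p) - r ^ (2 * p)) / (1 - r ^ (2 * p)) * (1 + α ^ 2 * r ^ 2) -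
  s ^ 2 - α ^ 2 * r ^ 2 * s ^ (-2 : ℝ)

/-- The period function `Θ_p{α, r} = ∫_1^r ds / √(F_p(s, α, r))`. -/
noncomputable def Theta (p α r : ℝ) : ℝ :=
  ∫ s in (1 : ℝ)..r, (Real.sqrt (Fp p α r s))⁻¹

private lemma Y_lt_one {p r : ℝ} (hp : p < -1) (hr : 1 < r) : r ^ (2*p) < 1 :=
  Real.rpow_lt_one_of_one_lt_of_neg hr (by linarith)

private lemma Fp_sub_Q {p α r s : ℝ} (hp : p < -1) (hr : 1 < r) (hs : 0 < s) :
    Fp p α r s - (s^2-1)*(r^2-s^2)/s^2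
      = (1-α^2) * ((r^2-s^2)/s^2 - (r^2-1) * ((s^(2*p) - r^(2*p))/(1 - r^(2*p)))) := by
  have hY := Y_lt_one hp hr
  have hY1 : 1 - r ^ (2*p) ≠ 0 := by linarith
  have hsne : s ≠ 0 := hs.ne'
  have hneg : s ^ (-2 : ℝ) = (s ^ (2:ℕ))⁻¹ := by
    rw [← Real.rpow_natCast s 2, ← Real.rpow_neg hs.le]; norm_num
  unfold Fp
  rw [show (2*p : ℝ) = 2*p by ring, hneg]
  field_simp
  ring

private lemma Fp_one {p α r : ℝ} (hp : p < -1) (hr : 1 < r) : Fp p α r 1 = 0 := by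
  have hY := Y_lt_one hp hr
  have hY1 : 1 - r ^ (2*p) ≠ 0 := by linarith
  unfold Fp
  rw [Real.one_rpow, Real.one_rpow]
  field_simp
  ring

private lemma Fp_r {p α r : ℝ} (hp : p < -1) (hr : 1 < r) : Fp p α r r = 0 := by
  have hY := Y_lt_one hp hr
  have hY1 : 1 - r ^ (2*p) ≠ 0 := by linarith
  have hr0 : (0:ℝ) < r := by linarith
  have hneg : r ^ (-2 : ℝ) = (r ^ (2:ℕ))⁻¹ := by
    rw [← Real.rpow_natCast r 2, ← Real.rpow_neg hr0.le]; norm_num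
  unfold Fp
  rw [hneg]
  field_simp
  ring

open Real Filter Set MeasureTheory intervalIntegral Topology

private lemma rpow_convex_ineq {q : ℝ} (hq : q ≤ 0) {x y a b : ℝ} (hx : 0 < x) (hy : 0 < y)
    (ha : 0 ≤ a) (hb : 0 ≤ b) (hab : a + b = 1) :
    (a * x + b * y) ^ q ≤ a * x ^ q + b * y ^ q := by
  have hxy : 0 < a * x + b * y := by
    rcases eq_or_lt_of_le ha with h | h
    · have hb1 : b = 1 := by linarith
      simp [← h, hb1, hy]
    · nlinarith [mul_nonneg hb hy.le]
  have hlog : a * Real.log x + b * Real.log y ≤ Real.log (a * x + b * y) := by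
    have := strictConcaveOn_log_Ioi.concaveOn.2 (Set.mem_Ioi.2 hx) (Set.mem_Ioi.2 hy)
      ha hb hab
    simpa [smul_eq_mul] using this
  have h2 : Real.exp (Real.log (a * x + b * y) * q)
      ≤ Real.exp ((a * Real.log x + b * Real.log y) * q) :=
    Real.exp_le_exp.2 (mul_le_mul_of_nonpos_right hlog hq)
  have h3 : Real.exp (a * (Real.log x * q) + b * (Real.log y * q))
      ≤ a * Real.exp (Real.log x * q) + b * Real.exp (Real.log y * q) := by
    have := convexOn_exp.2 (Set.mem_univ (Real.log x * q)) (Set.mem_univ (Real.log y * q))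
      ha hb hab
    simpa [smul_eq_mul] using this
  rw [Real.rpow_def_of_pos hxy, Real.rpow_def_of_pos hx, Real.rpow_def_of_pos hy]
  calc Real.exp (Real.log (a * x + b * y) * q)
      ≤ Real.exp ((a * Real.log x + b * Real.log y) * q) := h2
    _ = Real.exp (a * (Real.log x * q) + b * (Real.log y * q)) := by ring_nf
    _ ≤ _ := h3

private lemma key_ineq {p a b : ℝ} (hp : p ≤ -1) (ha : 1 ≤ a) (hab : a ≤ b) :
    (a ^ p - b ^ p) * (a * (b - 1)) ≤ (b - a) * (1 - b ^ p) := by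
  have ha0 : (0:ℝ) < a := lt_of_lt_of_le one_pos ha
  have hb0 : (0:ℝ) < b := lt_of_lt_of_le one_pos (ha.trans hab)
  rcases eq_or_lt_of_le (ha.trans hab) with hb | hb
  · -- b = 1 hence a = 1
    have ha1 : a = 1 := le_antisymm (hab.trans hb.symm.le) ha
    simp [ha1, ← hb]
  rcases eq_or_lt_of_le hab with rfl | hab'
  · simp
  -- main case : 1 ≤ a < b, 1 < b
  have hb1 : (0:ℝ) < b - 1 := by linarith
  have hlam : (0:ℝ) ≤ (b - a) / (b - 1) := by
    apply div_nonneg <;> linarith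
  have hmu : (0:ℝ) ≤ (a - 1) / (b - 1) := by
    apply div_nonneg <;> linarith
  have hsum : (b - a) / (b - 1) + (a - 1) / (b - 1) = 1 := by
    field_simp
    ring
  have h := rpow_convex_ineq (by linarith : p + 1 ≤ 0) one_pos hb0 hlam hmu hsum
  rw [Real.one_rpow] at h
  have hxa : (b - a) / (b - 1) * 1 + (a - 1) / (b - 1) * b = a := by
    field_simp
    ring
  rw [hxa] at h
  rw [Real.rpow_add_one ha0.ne' p, Real.rpow_add_one hb0.ne' p] at h
  have h' := mul_le_mul_of_nonneg_right h hb1.le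
  have e : ((b - a) / (b - 1) * 1 + (a - 1) / (b - 1) * (b ^ p * b)) * (b - 1)
      = (b - a) + (a - 1) * (b ^ p * b) := by
    field_simp
  rw [e] at h'
  nlinarith [h']

private lemma psi_key {p r s : ℝ} (hp : p < -1) (hr : 1 < r) (hs : 1 ≤ s) (hsr : s ≤ r) :
    (s ^ (2*p) - r ^ (2*p)) * (s^2 * (r^2 - 1)) ≤ (r^2 - s^2) * (1 - r ^ (2*p)) := by
  have hs0 : (0:ℝ) ≤ s := by linarith
  have hr0 : (0:ℝ) ≤ r := by linarith
  have e1 : ((s^2 : ℝ)) ^ p = s ^ (2*p) := by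
    rw [← Real.rpow_natCast s 2, ← Real.rpow_mul hs0]
    norm_num
  have e2 : ((r^2 : ℝ)) ^ p = r ^ (2*p) := by
    rw [← Real.rpow_natCast r 2, ← Real.rpow_mul hr0]
    norm_num
  have h := key_ineq (le_of_lt hp) (a := s^2) (b := r^2)
    (by nlinarith) (by nlinarith)
  rw [e1, e2] at h
  exact h

private lemma X_sub_Y_nonneg {p r s : ℝ} (hp : p < -1) (hr : 1 < r) (hs : 1 ≤ s) (hsr : s ≤ r) :
    0 ≤ s ^ (2*p) - r ^ (2*p) :=
  sub_nonneg.2 (Real.rpow_le_rpow_of_nonpos (by linarith) hsr (by linarith))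


private lemma Q_le_Fp {p α r : ℝ} (hp : p < -1) (hα₀ : 0 < α) (hα₁ : α < 1) (hr : 1 < r) :
    ∀ s ∈ Icc (1:ℝ) r, (s^2-1)*(r^2-s^2)/s^2 ≤ Fp p α r s := by
  intro s hsm
  obtain ⟨hs, hsr⟩ := hsm
  have hs0 : (0:ℝ) < s := by linarith
  have hY := Y_lt_one hp hr
  have h1Y : (0:ℝ) < 1 - r ^ (2*p) := by linarith
  have hkey := psi_key hp hr hs hsr
  have hid := Fp_sub_Q (α := α) hp hr hs0
  have hα2 : (0:ℝ) ≤ 1 - α^2 := by nlinarith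
  have hs2 : (0:ℝ) < s^2 := by positivity
  have hmain : (r^2-1) * ((s^(2*p) - r^(2*p))/(1 - r^(2*p))) ≤ (r^2-s^2)/s^2 := by
    rw [mul_div_assoc', div_le_div_iff₀ h1Y hs2]
    nlinarith [hkey]
  nlinarith [mul_nonneg hα2 (sub_nonneg.2 hmain)]

private lemma Fp_le {p α r : ℝ} (hp : p < -1) (hα₀ : 0 < α) (hα₁ : α < 1) (hr : 1 < r) :
    ∀ s ∈ Icc (1:ℝ) r, Fp p α r s ≤ (s^2-1)*(r^2-s^2)/s^2 + (1-α^2)*((r^2-s^2)/s^2) := by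
  intro s hsm
  obtain ⟨hs, hsr⟩ := hsm
  have hs0 : (0:ℝ) < s := by linarith
  have hY := Y_lt_one hp hr
  have h1Y : (0:ℝ) < 1 - r ^ (2*p) := by linarith
  have hXY := X_sub_Y_nonneg hp hr hs hsr
  have hid := Fp_sub_Q (α := α) hp hr hs0
  have hα2 : (0:ℝ) ≤ 1 - α^2 := by nlinarith
  have hterm : 0 ≤ (r^2-1) * ((s^(2*p) - r^(2*p))/(1 - r^(2*p))) := by
    apply mul_nonneg (by nlinarith)
    exact div_nonneg hXY h1Y.le
  nlinarith [mul_nonneg hα2 hterm]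

private lemma Q_integral {r : ℝ} (hr : 1 < r) {a b : ℝ} (ha : 1 ≤ a) (hab : a ≤ b) (hbr : b ≤ r) :
    IntervalIntegrable (fun s => (Real.sqrt ((s^2-1)*(r^2-s^2)/s^2))⁻¹) volume a b ∧
    ∫ s in a..b, (Real.sqrt ((s^2-1)*(r^2-s^2)/s^2))⁻¹
      = (Real.arcsin ((2*b^2-1-r^2)/(r^2-1)) - Real.arcsin ((2*a^2-1-r^2)/(r^2-1))) / 2 := by
  set gQ : ℝ → ℝ := fun s => (Real.sqrt ((s^2-1)*(r^2-s^2)/s^2))⁻¹ with hgQ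
  set φ : ℝ → ℝ := fun s => Real.arcsin ((2*s^2-1-r^2)/(r^2-1)) with hφ
  have hr2 : (0:ℝ) < r^2-1 := by nlinarith
  have hφc : Continuous φ := by
    apply Real.continuous_arcsin.comp
    exact ((continuous_const.mul (continuous_pow 2)).sub continuous_const).sub
      continuous_const |>.div_const _
  have hderiv : ∀ x ∈ Ioo a b, HasDerivAt φ (2 * gQ x) x := by
    intro x hx
    have hx1 : 1 < x := lt_of_le_of_lt ha hx.1
    have hxr : x < r := lt_of_lt_of_le hx.2 hbr
    have hx0 : (0:ℝ) < x := by linarith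
    have hQpos : 0 < (x^2-1)*(r^2-x^2)/x^2 := by
      apply div_pos (mul_pos (by nlinarith) (by nlinarith)) (by positivity)
    have hwlt : (2*x^2-1-r^2)/(r^2-1) < 1 := by
      rw [div_lt_one hr2]; nlinarith
    have hwgt : -1 < (2*x^2-1-r^2)/(r^2-1) := by
      rw [lt_div_iff₀ hr2]; nlinarith
    have hww : HasDerivAt (fun s : ℝ => (2*s^2-1-r^2)/(r^2-1)) (4*x/(r^2-1)) x := by
      have h0 : HasDerivAt (fun s : ℝ => 2*s^2-1-r^2) (4*x) x := by
        simpa [show (2:ℝ)*(2*x) = 4*x by ring] using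
          (((hasDerivAt_pow 2 x).const_mul 2).sub_const 1).sub_const (r^2)
      simpa using h0.div_const (r^2-1)
    have harc := (Real.hasDerivAt_arcsin hwgt.ne' hwlt.ne).comp x hww
    refine harc.congr_deriv (Eq.symm ?_)
    have hsq : 1 - ((2*x^2-1-r^2)/(r^2-1))^2 = (2*x/(r^2-1))^2 * ((x^2-1)*(r^2-x^2)/x^2) := by
      field_simp
      ring
    have hsqrtQ : 0 < Real.sqrt ((x^2-1)*(r^2-x^2)/x^2) := Real.sqrt_pos.2 hQpos
    rw [hsq, Real.sqrt_mul (sq_nonneg _), Real.sqrt_sq (by positivity : (0:ℝ) ≤ 2*x/(r^2-1))]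
    simp only [hgQ]
    set S := Real.sqrt ((x^2-1)*(r^2-x^2)/x^2) with hS
    have hSne : S ≠ 0 := hsqrtQ.ne'
    have hx2 : (2*x/(r^2-1)) ≠ 0 := by positivity
    field_simp
    ring
  have hint2 : IntervalIntegrable (fun s => 2 * gQ s) volume a b := by
    apply intervalIntegrable_deriv_of_nonneg (g := φ) hφc.continuousOn
    · rwa [min_eq_left hab, max_eq_right hab]
    · rw [min_eq_left hab, max_eq_right hab]
      intro x hx
      simp only [hgQ]
      positivity
  have hint : IntervalIntegrable gQ volume a b := by
    have h22 : gQ = fun s => (2 * gQ s)/2 := by funext s; ring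
    rw [h22]
    exact hint2.div_const 2
  refine ⟨hint, ?_⟩
  have heq := integral_eq_sub_of_hasDeriv_right_of_le hab hφc.continuousOn
    (fun x hx => (hderiv x hx).hasDerivWithinAt) hint2
  rw [intervalIntegral.integral_const_mul] at heq
  have : ∫ s in a..b, gQ s = (φ b - φ a)/2 := by linarith
  rw [this]

private lemma f_cont_Ioo {p α r : ℝ} (hp : p < -1) (hα₀ : 0 < α) (hα₁ : α < 1) (hr : 1 < r) :
    ContinuousOn (fun s => (Real.sqrt (Fp p α r s))⁻¹) (Ioo 1 r) := by
  have hFc : ContinuousOn (fun s => Fp p α r s) (Ioo 1 r) := by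
    intro x hx
    have hx1 : 1 < x := hx.1
    have hx0 : x ≠ 0 := by intro h; rw [h] at hx1; linarith
    apply ContinuousAt.continuousWithinAt
    have h1 : ContinuousAt (fun s : ℝ => s ^ (2*p)) x :=
      Real.continuousAt_rpow_const x (2*p) (Or.inl hx0)
    have h2 : ContinuousAt (fun s : ℝ => s ^ (-2:ℝ)) x :=
      Real.continuousAt_rpow_const x (-2) (Or.inl hx0)
    unfold Fp
    exact (((((continuousAt_const.sub h1).div_const _).mul continuousAt_const).add
      (((h1.sub continuousAt_const).div_const _).mul continuousAt_const)).sub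
      ((continuous_pow 2).continuousAt)).sub (continuousAt_const.mul h2)
  apply ContinuousOn.inv₀ (Real.continuous_sqrt.comp_continuousOn hFc)
  intro x hx
  have hQ : 0 < (x^2-1)*(r^2-x^2)/x^2 := by
    have hx0 : (0:ℝ) < x := by linarith [hx.1]
    apply div_pos (mul_pos (by nlinarith [hx.1]) (by nlinarith [hx.2])) (by positivity)
  have hQF := Q_le_Fp hp hα₀ hα₁ hr x ⟨hx.1.le, hx.2.le⟩
  exact (Real.sqrt_pos.2 (lt_of_lt_of_le hQ hQF)).ne'

private lemma f_integrable {p α r : ℝ} (hp : p < -1) (hα₀ : 0 < α) (hα₁ : α < 1) (hr : 1 < r) :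
    IntervalIntegrable (fun s => (Real.sqrt (Fp p α r s))⁻¹) volume 1 r := by
  have hgQ := (Q_integral hr le_rfl hr.le le_rfl).1
  rw [intervalIntegrable_iff_integrableOn_Ioc_of_le hr.le] at hgQ ⊢
  rw [integrableOn_Ioc_iff_integrableOn_Ioo] at hgQ ⊢
  apply Integrable.mono' hgQ
    ((f_cont_Ioo hp hα₀ hα₁ hr).aestronglyMeasurable measurableSet_Ioo)
  rw [ae_restrict_iff' measurableSet_Ioo]
  apply ae_of_all
  intro x hx
  have hx0 : (0:ℝ) < x := by linarith [hx.1]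
  have hQ : 0 < (x^2-1)*(r^2-x^2)/x^2 := by
    apply div_pos (mul_pos (by nlinarith [hx.1]) (by nlinarith [hx.2])) (by positivity)
  have hQF := Q_le_Fp hp hα₀ hα₁ hr x ⟨hx.1.le, hx.2.le⟩
  rw [Real.norm_eq_abs, abs_of_nonneg (by positivity)]
  exact inv_anti₀ (Real.sqrt_pos.2 hQ) (Real.sqrt_le_sqrt hQF)

private lemma theta_le {p α r : ℝ} (hp : p < -1) (hα₀ : 0 < α) (hα₁ : α < 1) (hr : 1 < r) :
    Theta p α r ≤ π/2 := by
  obtain ⟨hint, hval⟩ := Q_integral hr le_rfl hr.le le_rfl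
  have hr2 : (r:ℝ)^2 - 1 ≠ 0 := by nlinarith
  have hval2 : ∫ s in (1:ℝ)..r, (Real.sqrt ((s^2-1)*(r^2-s^2)/s^2))⁻¹ = π/2 := by
    rw [hval]
    have e1 : (2*r^2-1-r^2)/(r^2-1) = 1 := by
      rw [div_eq_one_iff_eq hr2]; ring
    have e2 : (2*(1:ℝ)^2-1-r^2)/(r^2-1) = -1 := by
      rw [div_eq_iff hr2]; ring
    rw [e1, e2, Real.arcsin_one, Real.arcsin_neg_one]
    ring
  have hle : ∀ x ∈ Icc (1:ℝ) r,
      (Real.sqrt (Fp p α r x))⁻¹ ≤ (Real.sqrt ((x^2-1)*(r^2-x^2)/x^2))⁻¹ := by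
    intro x hx
    rcases eq_or_lt_of_le hx.1 with h1 | h1
    · rw [← h1, Fp_one hp hr]
      norm_num
    rcases eq_or_lt_of_le hx.2 with h2 | h2
    · rw [h2, Fp_r hp hr]
      have : (r^2-1)*(r^2-r^2)/r^2 = 0 := by ring
      rw [this]
    have hx0 : (0:ℝ) < x := by linarith
    have hQ : 0 < (x^2-1)*(r^2-x^2)/x^2 := by
      apply div_pos (mul_pos (by nlinarith) (by nlinarith)) (by positivity)
    exact inv_anti₀ (Real.sqrt_pos.2 hQ)
      (Real.sqrt_le_sqrt (Q_le_Fp hp hα₀ hα₁ hr x hx))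
  calc Theta p α r ≤ ∫ s in (1:ℝ)..r, (Real.sqrt ((s^2-1)*(r^2-s^2)/s^2))⁻¹ :=
        intervalIntegral.integral_mono_on hr.le (f_integrable hp hα₀ hα₁ hr) hint hle
    _ = π/2 := hval2

private lemma le_theta {p α r : ℝ} (hp : p < -1) (hα₀ : 0 < α) (hα₁ : α < 1) (hr : 1 < r) :
    (Real.sqrt (1 + (1-α^2)/(r-1)))⁻¹ *
      ((π/2 - Real.arcsin ((2*r-1-r^2)/(r^2-1)))/2) ≤ Theta p α r := by
  have hr0 : (0:ℝ) < r := by linarith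
  set t := Real.sqrt r with htdef
  have ht2 : t^2 = r := Real.sq_sqrt hr0.le
  have ht1 : 1 < t := by
    nlinarith [Real.sqrt_nonneg r]
  have htr : t ≤ r := by
    nlinarith [Real.sqrt_nonneg r]
  set K := 1 + (1-α^2)/(r-1) with hKdef
  have hα2 : (0:ℝ) < 1 - α^2 := by nlinarith
  have hrm1 : (0:ℝ) < r - 1 := by linarith
  have hK1 : 1 ≤ K := by
    rw [hKdef]
    nlinarith [div_pos hα2 hrm1]
  have hK0 : (0:ℝ) < K := by linarith
  have hfint := f_integrable hp hα₀ hα₁ hr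
  obtain ⟨hQint, hQval⟩ := Q_integral hr ht1.le htr le_rfl
  -- pointwise lower bound on [t, r]
  have hle : ∀ x ∈ Icc t r,
      (Real.sqrt K)⁻¹ * (Real.sqrt ((x^2-1)*(r^2-x^2)/x^2))⁻¹ ≤ (Real.sqrt (Fp p α r x))⁻¹ := by
    intro x hx
    rcases eq_or_lt_of_le hx.2 with h2 | h2
    · have : (x^2-1)*(r^2-x^2)/x^2 = 0 := by rw [h2]; ring
      rw [this]
      simp
    have hx1 : 1 < x := lt_of_lt_of_le ht1 hx.1
    have hx0 : (0:ℝ) < x := by linarith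
    have hxt : r ≤ x^2 := by nlinarith [hx.1, Real.sqrt_nonneg r]
    have hQ : 0 < (x^2-1)*(r^2-x^2)/x^2 := by
      apply div_pos (mul_pos (by nlinarith) (by nlinarith)) (by positivity)
    have hFQ := Q_le_Fp hp hα₀ hα₁ hr x ⟨hx1.le, h2.le⟩
    have hFpos : 0 < Fp p α r x := lt_of_lt_of_le hQ hFQ
    -- upper bound : Fp ≤ K * Q
    have hup : Fp p α r x ≤ K * ((x^2-1)*(r^2-x^2)/x^2) := by
      have h1 := Fp_le hp hα₀ hα₁ hr x ⟨hx1.le, h2.le⟩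
      have e : K * ((x^2-1)*(r^2-x^2)/x^2)
          = ((x^2-1)*(r^2-x^2)/x^2 + (1-α^2)*((r^2-x^2)/x^2))
            + ((1-α^2)*((x^2-r)*(r^2-x^2)))/((r-1)*x^2) := by
        rw [hKdef]
        field_simp
        ring
      have hpos : 0 ≤ ((1-α^2)*((x^2-r)*(r^2-x^2)))/((r-1)*x^2) := by
        apply div_nonneg
        · apply mul_nonneg hα2.le
          apply mul_nonneg (by linarith) (by nlinarith)
        · positivity
      linarith
    have hsk : Real.sqrt (K * ((x^2-1)*(r^2-x^2)/x^2))
        = Real.sqrt K * Real.sqrt ((x^2-1)*(r^2-x^2)/x^2) := Real.sqrt_mul hK0.le _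
    have hinv := inv_anti₀ (Real.sqrt_pos.2 hFpos) (Real.sqrt_le_sqrt hup)
    rw [hsk, mul_inv] at hinv
    exact hinv
  -- integral manipulations
  have hfint1 : IntervalIntegrable (fun s => (Real.sqrt (Fp p α r s))⁻¹) volume 1 t := by
    apply hfint.mono_set
    rw [uIcc_of_le ht1.le, uIcc_of_le hr.le]
    exact Icc_subset_Icc le_rfl htr
  have hfint2 : IntervalIntegrable (fun s => (Real.sqrt (Fp p α r s))⁻¹) volume t r := by
    apply hfint.mono_set
    rw [uIcc_of_le htr, uIcc_of_le hr.le]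
    exact Icc_subset_Icc ht1.le le_rfl
  have hsplit : Theta p α r
      = (∫ s in (1:ℝ)..t, (Real.sqrt (Fp p α r s))⁻¹)
        + ∫ s in t..r, (Real.sqrt (Fp p α r s))⁻¹ :=
    (intervalIntegral.integral_add_adjacent_intervals hfint1 hfint2).symm
  have h1nonneg : 0 ≤ ∫ s in (1:ℝ)..t, (Real.sqrt (Fp p α r s))⁻¹ := by
    apply intervalIntegral.integral_nonneg ht1.le
    intro x hx
    positivity
  have hmono : ∫ s in t..r, (Real.sqrt K)⁻¹ * (Real.sqrt ((s^2-1)*(r^2-s^2)/s^2))⁻¹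
      ≤ ∫ s in t..r, (Real.sqrt (Fp p α r s))⁻¹ :=
    intervalIntegral.integral_mono_on htr (hQint.const_mul _) hfint2 hle
  have hcval : ∫ s in t..r, (Real.sqrt K)⁻¹ * (Real.sqrt ((s^2-1)*(r^2-s^2)/s^2))⁻¹
      = (Real.sqrt K)⁻¹ * ((π/2 - Real.arcsin ((2*r-1-r^2)/(r^2-1)))/2) := by
    rw [intervalIntegral.integral_const_mul, hQval]
    have hr2 : (r:ℝ)^2 - 1 ≠ 0 := by nlinarith
    have e1 : (2*r^2-1-r^2)/(r^2-1) = 1 := by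
      rw [div_eq_one_iff_eq hr2]; ring
    have e2 : (2*t^2-1-r^2)/(r^2-1) = (2*r-1-r^2)/(r^2-1) := by rw [ht2]
    rw [e1, e2, Real.arcsin_one]
  linarith [hmono, hcval, hsplit, h1nonneg]

theorem stmt_11 (p α : ℝ) (hp : p < -1) (hα₀ : 0 < α) (hα₁ : α < 1) :
    Tendsto (fun r : ℝ => Theta p α r) atTop (nhds (π / 2)) := by
  set ℓ : ℝ → ℝ := fun r => (Real.sqrt (1 + (1-α^2)/(r-1)))⁻¹ *
      ((π/2 - Real.arcsin ((2*r-1-r^2)/(r^2-1)))/2) with hℓdef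
  have hupper : ∀ᶠ r in atTop, Theta p α r ≤ π/2 := by
    filter_upwards [eventually_gt_atTop (1:ℝ)] with r hr using theta_le hp hα₀ hα₁ hr
  have hlower : ∀ᶠ r in atTop, ℓ r ≤ Theta p α r := by
    filter_upwards [eventually_gt_atTop (1:ℝ)] with r hr using le_theta hp hα₀ hα₁ hr
  have hsub : Tendsto (fun r : ℝ => r - 1) atTop atTop := by
    simpa [sub_eq_add_neg] using tendsto_atTop_add_const_right atTop (-1:ℝ) tendsto_id
  have h1 : Tendsto (fun r : ℝ => 1 + (1-α^2)/(r-1)) atTop (𝓝 1) := by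
    have h0 : Tendsto (fun r : ℝ => (1-α^2)/(r-1)) atTop (𝓝 0) :=
      Tendsto.div_atTop tendsto_const_nhds hsub
    simpa using tendsto_const_nhds.add h0
  have h2 : Tendsto (fun r : ℝ => (Real.sqrt (1 + (1-α^2)/(r-1)))⁻¹) atTop (𝓝 1) := by
    have hs := (Real.continuous_sqrt.tendsto 1).comp h1
    rw [Real.sqrt_one] at hs
    simpa using hs.inv₀ (by norm_num)
  have h3 : Tendsto (fun r : ℝ => (2*r-1-r^2)/(r^2-1)) atTop (𝓝 (-1)) := by
    have heq : ∀ᶠ r : ℝ in atTop, -1 + 2/(r+1) = (2*r-1-r^2)/(r^2-1) := by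
      filter_upwards [eventually_gt_atTop (1:ℝ)] with r hr
      have ha : r^2 - 1 ≠ 0 := by nlinarith
      have hb : r + 1 ≠ 0 := by nlinarith
      field_simp
      ring
    have hlim : Tendsto (fun r : ℝ => -1 + 2/(r+1)) atTop (𝓝 (-1)) := by
      have h0 : Tendsto (fun r : ℝ => 2/(r+1)) atTop (𝓝 0) :=
        Tendsto.div_atTop tendsto_const_nhds (tendsto_atTop_add_const_right atTop (1:ℝ) tendsto_id)
      simpa using tendsto_const_nhds.add h0
    exact Tendsto.congr' heq hlim
  have h4 : Tendsto (fun r : ℝ => Real.arcsin ((2*r-1-r^2)/(r^2-1))) atTop (𝓝 (-(π/2))) := by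
    have := (Real.continuous_arcsin.tendsto (-1)).comp h3
    rwa [Real.arcsin_neg_one] at this
  have hℓ : Tendsto ℓ atTop (𝓝 (π/2)) := by
    have := h2.mul (((tendsto_const_nhds (x := π/2) (f := atTop)).sub h4).div_const 2)
    have e : (1:ℝ) * ((π/2 - -(π/2))/2) = π/2 := by ring
    rw [e] at this
    exact this
  exact tendsto_of_tendsto_of_tendsto_of_le_of_le' hℓ tendsto_const_nhds hlower hupper
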